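/- Let S be the target set for the Cantor game on [a₀, b₀], where a₀ < b₀. If S is a Bernstein set in [a₀, b₀], then neither player A nor player B has a winning strategy. -/

import Mathlib

open Filter Set

/-- Data generating a generalized Cantor set: closed intervals
`I_{i₁,…,iₙ} = [c l, d l]` indexed by nonempty finite binary sequences
(`l : List Bool`, with the last entry the most recently added index),
inside a closed interval `[lo, hi]`, with diameters controlled by a strictly
decreasing positive sequence `e` tending to `0`. -/
structure GenCantor where
  lo : ℝ
  hi : ℝ
  lo_lt_hi : lo < hi
  e : ℕ → ℝ
  e_pos : ∀ n : ℕ, 0 < e n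
  e_anti : StrictAnti e
  e_lim : Filter.Tendsto e Filter.atTop (nhds 0)
  c : List Bool → ℝ
  d : List Bool → ℝ
  diam_pos : ∀ l : List Bool, l ≠ [] → 0 < d l - c l
  diam_lt : ∀ l : List Bool, l ≠ [] → d l - c l < e l.length
  root_sub : ∀ i : Bool, Set.Icc (c [i]) (d [i]) ⊆ Set.Icc lo hi
  nested : ∀ l : List Bool, l ≠ [] → ∀ i : Bool,
    Set.Icc (c (l ++ [i])) (d (l ++ [i])) ⊆ Set.Icc (c l) (d l)
  disj : ∀ l : List Bool,
    Set.Icc (c (l ++ [false])) (d (l ++ [false])) ∩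
      Set.Icc (c (l ++ [true])) (d (l ++ [true])) = ∅

/-- The generalized Cantor set generated by the data `G`:
`C = ⋂_{n ≥ 1} ⋃_{i₁,…,iₙ} I_{i₁,…,iₙ}`. -/
def GenCantor.C (G : GenCantor) : Set ℝ :=
  ⋂ n : ℕ, ⋃ l ∈ {l : List Bool | l.length = n + 1}, Set.Icc (G.c l) (G.d l)

/-- A set of reals is a generalized Cantor set if it is generated by some data. -/
def IsGenCantorSet (C : Set ℝ) : Prop := ∃ G : GenCantor, G.C = C

/-- The length-`(n+1)` initial segment `[s 0, …, s n]` of a binary sequence. -/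
def prefixSeq (s : ℕ → Bool) (n : ℕ) : List Bool := List.ofFn fun i : Fin (n + 1) => s i

/-- A set `P ⊆ ℝ` is perfect if it is closed and each of its points is a
limit point of `P`. -/
def PerfectSet (P : Set ℝ) : Prop := IsClosed P ∧ ∀ x ∈ P, x ∈ closure (P \ {x})

/-- A valid history for player A before A's move number `n+1`:
moves `a 0 = a₀ < a 1 < ⋯ < a n < b n < ⋯ < b 1 < b 0 = b₀`. -/
def ValidHistA (a₀ b₀ : ℝ) {n : ℕ} (a b : Fin (n + 1) → ℝ) : Prop :=
  a 0 = a₀ ∧ b 0 = b₀ ∧ StrictMono a ∧ StrictAnti b ∧ a (Fin.last n) < b (Fin.last n)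

/-- A strategy for player A in the Cantor game on `[a₀, b₀]`:
functions `f n` producing the move `a (n+1)` from the history
`(a 0, b 0, …, a n, b n)`, with `a n < f n a b < b n` on valid histories. -/
structure StratA (a₀ b₀ : ℝ) where
  f : (n : ℕ) → (Fin (n + 1) → ℝ) → (Fin (n + 1) → ℝ) → ℝ
  valid : ∀ (n : ℕ) (a b : Fin (n + 1) → ℝ), ValidHistA a₀ b₀ a b →
    a (Fin.last n) < f n a b ∧ f n a b < b (Fin.last n)

/-- A valid history for player B before B's move number `n+1`:
`a 0 = a₀ < a 1 < ⋯ < a (n+1) < b n < ⋯ < b 1 < b 0 = b₀`. -/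
def ValidHistB (a₀ b₀ : ℝ) {n : ℕ} (a : Fin (n + 2) → ℝ) (b : Fin (n + 1) → ℝ) : Prop :=
  a 0 = a₀ ∧ b 0 = b₀ ∧ StrictMono a ∧ StrictAnti b ∧ a (Fin.last (n + 1)) < b (Fin.last n)

/-- A strategy for player B in the Cantor game on `[a₀, b₀]`:
functions `g n` producing the move `b (n+1)` from the history
`(a 0, b 0, …, a n, b n, a (n+1))`, with `a (n+1) < g n a b < b n` on valid histories. -/
structure StratB (a₀ b₀ : ℝ) where
  g : (n : ℕ) → (Fin (n + 2) → ℝ) → (Fin (n + 1) → ℝ) → ℝ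
  valid : ∀ (n : ℕ) (a : Fin (n + 2) → ℝ) (b : Fin (n + 1) → ℝ), ValidHistB a₀ b₀ a b →
    a (Fin.last (n + 1)) < g n a b ∧ g n a b < b (Fin.last n)

/-- A play of the Cantor game on `[a₀, b₀]`:
`a (n-1) < a n < b n < b (n-1)` for all `n ≥ 1`. -/
def IsPlay (a₀ b₀ : ℝ) (a b : ℕ → ℝ) : Prop :=
  a 0 = a₀ ∧ b 0 = b₀ ∧ ∀ n : ℕ, a n < a (n + 1) ∧ a (n + 1) < b (n + 1) ∧ b (n + 1) < b n

/-- A play is consistent with a strategy for A if each of A's moves is given by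
the strategy applied to the preceding history. -/
def ConsistentA {a₀ b₀ : ℝ} (σ : StratA a₀ b₀) (a b : ℕ → ℝ) : Prop :=
  ∀ n : ℕ, a (n + 1) = σ.f n (fun i : Fin (n + 1) => a i) (fun i : Fin (n + 1) => b i)

/-- A play is consistent with a strategy for B if each of B's moves is given by
the strategy applied to the preceding history. -/
def ConsistentB {a₀ b₀ : ℝ} (σ : StratB a₀ b₀) (a b : ℕ → ℝ) : Prop :=
  ∀ n : ℕ, b (n + 1) = σ.g n (fun i : Fin (n + 2) => a i) (fun i : Fin (n + 1) => b i)

/-- The limit set of a strategy for player A: all limits `lim aₙ` over plays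
consistent with the strategy. -/
def limitSetA {a₀ b₀ : ℝ} (σ : StratA a₀ b₀) : Set ℝ :=
  {x | ∃ a b : ℕ → ℝ, IsPlay a₀ b₀ a b ∧ ConsistentA σ a b ∧
    Filter.Tendsto a Filter.atTop (nhds x)}

/-- The limit set of a strategy for player B: all limits `lim aₙ` over plays
consistent with the strategy. -/
def limitSetB {a₀ b₀ : ℝ} (σ : StratB a₀ b₀) : Set ℝ :=
  {x | ∃ a b : ℕ → ℝ, IsPlay a₀ b₀ a b ∧ ConsistentB σ a b ∧
    Filter.Tendsto a Filter.atTop (nhds x)}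

/-- A strategy for A is winning for target set `S` iff its limit set lies in `S`. -/
def WinningA {a₀ b₀ : ℝ} (σ : StratA a₀ b₀) (S : Set ℝ) : Prop := limitSetA σ ⊆ S

/-- A strategy for B is winning for target set `S` iff its limit set lies in
`[a₀, b₀] − S`. -/
def WinningB {a₀ b₀ : ℝ} (σ : StratB a₀ b₀) (S : Set ℝ) : Prop :=
  limitSetB σ ⊆ Set.Icc a₀ b₀ \ S

/-- `B` is a Bernstein set in `X ⊆ ℝ` (with its subspace topology) if `B ⊆ X` and
neither `B` nor `X − B` contains a set that is uncountable and closed in `X`. -/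
def IsBernsteinIn (X B : Set ℝ) : Prop :=
  B ⊆ X ∧
    (¬ ∃ T : Set ℝ, T ⊆ B ∧ ¬ T.Countable ∧ IsClosed (Subtype.val ⁻¹' T : Set X)) ∧
    (¬ ∃ T : Set ℝ, T ⊆ X \ B ∧ ¬ T.Countable ∧ IsClosed (Subtype.val ⁻¹' T : Set X))

/-- The set of right condensation points of `S` in `[a₀, b₀]`. -/
def rightCondPts (a₀ b₀ : ℝ) (S : Set ℝ) : Set ℝ :=
  {x ∈ Set.Icc a₀ b₀ | ∀ ε > 0, ¬ (Set.Ioo x (x + ε) ∩ S).Countable}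

/-- If the target set is a Bernstein set in `[a₀, b₀]`, then neither
player has a winning strategy. -/

lemma snoc_zero' {n : ℕ} (f : Fin (n+1) → ℝ) (y : ℝ) : (Fin.snoc f y : Fin (n+2) → ℝ) 0 = f 0 := by
  have : (0 : Fin (n+2)) = Fin.castSucc 0 := rfl
  rw [this, Fin.snoc_castSucc]

lemma strictMono_snoc {n : ℕ} {f : Fin (n+1) → ℝ} {y : ℝ} (hf : StrictMono f)
    (hy : f (Fin.last n) < y) : StrictMono (Fin.snoc f y) := by
  intro i j hij
  induction j using Fin.lastCases with
  | last =>
    induction i using Fin.lastCases with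
    | last => exact absurd hij (lt_irrefl _)
    | cast i =>
      rw [Fin.snoc_castSucc, Fin.snoc_last]
      exact lt_of_le_of_lt (hf.monotone (Fin.le_last i)) hy
  | cast j =>
    induction i using Fin.lastCases with
    | last => exact absurd (hij.trans (Fin.castSucc_lt_last j)) (lt_irrefl _)
    | cast i =>
      rw [Fin.snoc_castSucc, Fin.snoc_castSucc]
      exact hf (Fin.castSucc_lt_castSucc_iff.mp hij)

lemma strictAnti_snoc {n : ℕ} {f : Fin (n+1) → ℝ} {y : ℝ} (hf : StrictAnti f)
    (hy : y < f (Fin.last n)) : StrictAnti (Fin.snoc f y) := by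
  intro i j hij
  induction j using Fin.lastCases with
  | last =>
    induction i using Fin.lastCases with
    | last => exact absurd hij (lt_irrefl _)
    | cast i =>
      rw [Fin.snoc_castSucc, Fin.snoc_last]
      exact lt_of_lt_of_le hy (hf.antitone (Fin.le_last i))
  | cast j =>
    induction i using Fin.lastCases with
    | last => exact absurd (hij.trans (Fin.castSucc_lt_last j)) (lt_irrefl _)
    | cast i =>
      rw [Fin.snoc_castSucc, Fin.snoc_castSucc]
      exact hf (Fin.castSucc_lt_castSucc_iff.mp hij)

lemma continuous_of_prefix {f : (ℕ → Bool) → ℝ} {n : ℕ}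
    (h : ∀ s t : ℕ → Bool, (∀ i < n, s i = t i) → f s = f t) : Continuous f := by
  have hE : f = (fun p : Fin n → Bool => f (fun i => if hi : i < n then p ⟨i, hi⟩ else false)) ∘
      (fun s (i : Fin n) => s i) := by
    funext s
    exact h s _ (fun i hi => by simp [hi])
  rw [hE]
  exact (continuous_of_discreteTopology).comp (continuous_pi fun i => continuous_apply _)

open Classical in
lemma uncountable_cantor : ¬ Countable (ℕ → Bool) := by
  intro h
  obtain ⟨f, hf⟩ := (countable_iff_exists_injective _).mp h
  have hg : Function.Injective (fun A : Set ℕ => fun n => decide (n ∈ A)) := by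
    intro A B hAB
    ext n
    have := congrFun hAB n
    simpa using this
  exact Function.cantor_injective _ (hf.comp hg)

/-- The abstract Cantor scheme lemma. -/
lemma cantorScheme {A U : (ℕ → Bool) → ℕ → ℝ}
    (hmono : ∀ s, StrictMono (A s))
    (hAU : ∀ s m n, A s m < U s n)
    (hdiam : ∀ s n, U s (n+1) - A s (n+1) ≤ (1/2)^n)
    (hprefix : ∀ s t : ℕ → Bool, ∀ n, (∀ i < n, s i = t i) → A s n = A t n ∧ U s n = U t n)
    (hsep : ∀ s t : ℕ → Bool, ∀ n, (∀ i < n, s i = t i) → s n = false → t n = true →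
      U s (n+1) < A t (n+2)) :
    ∃ x : (ℕ → Bool) → ℝ, Continuous x ∧ Function.Injective x ∧
      (∀ s, Tendsto (A s) atTop (nhds (x s))) ∧ (∀ s n, A s n ≤ x s ∧ x s ≤ U s n) := by
  have hbdd : ∀ s : ℕ → Bool, BddAbove (Set.range (A s)) := fun s =>
    ⟨U s 0, by rintro _ ⟨m, rfl⟩; exact (hAU s m 0).le⟩
  set x : (ℕ → Bool) → ℝ := fun s => ⨆ n, A s n with hx
  have hxle : ∀ s n, A s n ≤ x s := fun s n => le_ciSup (hbdd s) n
  have hxub : ∀ s n, x s ≤ U s n := fun s n => ciSup_le fun m => (hAU s m n).le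
  have htend : ∀ s, Tendsto (A s) atTop (nhds (x s)) := fun s =>
    tendsto_atTop_ciSup (hmono s).monotone (hbdd s)
  have hinj : Function.Injective x := by
    intro s t hst
    by_contra hne
    have hex : ∃ n, s n ≠ t n := by
      by_contra hc; push_neg at hc; exact hne (funext hc)
    set n := Nat.find hex with hn
    have h1 : s n ≠ t n := Nat.find_spec hex
    have h2 : ∀ i < n, s i = t i := fun i hi => by
      by_contra hcc; exact Nat.find_min hex hi hcc
    have key : ∀ u v : ℕ → Bool, (∀ i < n, u i = v i) → u n = false → v n = true →
        x u < x v := fun u v ha hu hv =>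
      lt_of_le_of_lt (hxub u (n+1)) (lt_of_lt_of_le (hsep u v n ha hu hv) (hxle v (n+2)))
    cases hs : s n with
    | false =>
      have ht : t n = true := by
        cases ht : t n with
        | false => exact absurd (hs.trans ht.symm) h1
        | true => rfl
      exact absurd hst (ne_of_lt (key s t h2 hs ht))
    | true =>
      have ht : t n = false := by
        cases ht : t n with
        | true => exact absurd (hs.trans ht.symm) h1
        | false => rfl
      exact absurd hst.symm (ne_of_lt (key t s (fun i hi => (h2 i hi).symm) ht hs))
  have hcont : Continuous x := by
    have hAc : ∀ n : ℕ, Continuous (fun s => A s n) := fun n =>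
      continuous_of_prefix (fun s t h => (hprefix s t n h).1)
    have hu : TendstoUniformly (fun n s => A s n) x atTop := by
      rw [Metric.tendstoUniformly_iff]
      intro ε hε
      obtain ⟨N, hN⟩ := exists_pow_lt_of_lt_one hε (by norm_num : (1:ℝ)/2 < 1)
      rw [eventually_atTop]
      refine ⟨N + 1, fun n hn s => ?_⟩
      obtain ⟨m, rfl⟩ : ∃ m, n = m + 1 := ⟨n - 1, by omega⟩
      have h1 : A s (m+1) ≤ x s := hxle s (m+1)
      have h2 : x s ≤ U s (m+1) := hxub s (m+1)
      have h3 : U s (m+1) - A s (m+1) ≤ (1/2)^m := hdiam s m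
      have h4 : ((1:ℝ)/2)^m ≤ (1/2)^N :=
        pow_le_pow_of_le_one (by norm_num) (by norm_num) (by omega)
      rw [Real.dist_eq, abs_sub_lt_iff]
      constructor <;> nlinarith
    exact hu.continuous (Eventually.of_forall hAc).frequently
  exact ⟨x, hcont, hinj, htend, fun s n => ⟨hxle s n, hxub s n⟩⟩

lemma range_props (X : Set ℝ) {x : (ℕ → Bool) → ℝ}
    (hc : Continuous x) (hi : Function.Injective x) :
    ¬ (Set.range x).Countable ∧ IsClosed ((Subtype.val : X → ℝ) ⁻¹' Set.range x) := by
  constructor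
  · intro h
    have : (x ⁻¹' Set.range x).Countable := h.preimage hi
    rw [Set.preimage_range] at this
    exact uncountable_cantor (Set.countable_univ_iff.mp this)
  · exact ((isCompact_range hc).isClosed).preimage continuous_subtype_val

section GameA

variable {a₀ b₀ : ℝ}

noncomputable def nxt (σ : StratA a₀ b₀) (n : ℕ)
    (h : (Fin (n+1) → ℝ) × (Fin (n+1) → ℝ)) : ℝ := σ.f n h.1 h.2

noncomputable def bTrue (σ : StratA a₀ b₀) (n : ℕ)
    (h : (Fin (n+1) → ℝ) × (Fin (n+1) → ℝ)) : ℝ :=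
  (nxt σ n h + min (h.2 (Fin.last n)) (nxt σ n h + (1/2)^n)) / 2

noncomputable def aTrue (σ : StratA a₀ b₀) (n : ℕ)
    (h : (Fin (n+1) → ℝ) × (Fin (n+1) → ℝ)) : ℝ :=
  σ.f (n+1) (Fin.snoc h.1 (nxt σ n h)) (Fin.snoc h.2 (bTrue σ n h))

noncomputable def bFalse (σ : StratA a₀ b₀) (n : ℕ)
    (h : (Fin (n+1) → ℝ) × (Fin (n+1) → ℝ)) : ℝ :=
  (nxt σ n h + min (aTrue σ n h) (nxt σ n h + (1/2)^n)) / 2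

noncomputable def stepA (σ : StratA a₀ b₀) (n : ℕ) (i : Bool)
    (h : (Fin (n+1) → ℝ) × (Fin (n+1) → ℝ)) : (Fin (n+2) → ℝ) × (Fin (n+2) → ℝ) :=
  (Fin.snoc h.1 (nxt σ n h), Fin.snoc h.2 (if i then bTrue σ n h else bFalse σ n h))

noncomputable def hA (σ : StratA a₀ b₀) (s : ℕ → Bool) :
    (n : ℕ) → (Fin (n+1) → ℝ) × (Fin (n+1) → ℝ)
  | 0 => (fun _ => a₀, fun _ => b₀)
  | n+1 => stepA σ n (s n) (hA σ s n)

lemma validHistA_snoc {n : ℕ} {a b : Fin (n+1) → ℝ}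
    (h : ValidHistA a₀ b₀ a b) {x y : ℝ} (hx : a (Fin.last n) < x) (hxy : x < y)
    (hy : y < b (Fin.last n)) : ValidHistA a₀ b₀ (Fin.snoc a x) (Fin.snoc b y) := by
  obtain ⟨h1, h2, h3, h4, h5⟩ := h
  refine ⟨by rw [snoc_zero']; exact h1, by rw [snoc_zero']; exact h2,
    strictMono_snoc h3 hx, strictAnti_snoc h4 hy, ?_⟩
  rw [Fin.snoc_last, Fin.snoc_last]
  exact hxy

/-- All the one-step facts for the A construction. -/
lemma stepA_facts (σ : StratA a₀ b₀) (n : ℕ)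
    (h : (Fin (n+1) → ℝ) × (Fin (n+1) → ℝ)) (hv : ValidHistA a₀ b₀ h.1 h.2) (i : Bool) :
    ValidHistA a₀ b₀ (stepA σ n i h).1 (stepA σ n i h).2 ∧
    h.1 (Fin.last n) < (stepA σ n i h).1 (Fin.last (n+1)) ∧
    (stepA σ n i h).2 (Fin.last (n+1)) < h.2 (Fin.last n) ∧
    (stepA σ n i h).2 (Fin.last (n+1)) - (stepA σ n i h).1 (Fin.last (n+1)) ≤ (1/2)^n ∧
    bFalse σ n h < aTrue σ n h := by
  obtain ⟨hfa, hfb⟩ := σ.valid n h.1 h.2 hv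
  set a' := nxt σ n h with ha'
  set bL := h.2 (Fin.last n) with hbL
  have hpow : (0:ℝ) < (1/2)^n := by positivity
  have hminT : a' < min bL (a' + (1/2)^n) := lt_min hfb (by linarith)
  have hbT1 : a' < bTrue σ n h := by
    rw [bTrue]; rw [← ha', ← hbL]
    have := hminT; linarith
  have hbT2 : bTrue σ n h < bL := by
    rw [bTrue, ← ha', ← hbL]
    have := min_le_left bL (a' + (1/2)^n); linarith
  have hbTd : bTrue σ n h ≤ a' + (1/2)^n := by
    rw [bTrue, ← ha', ← hbL]
    have := min_le_right bL (a' + (1/2)^n); linarith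
  have hvT : ValidHistA a₀ b₀ (Fin.snoc h.1 a') (Fin.snoc h.2 (bTrue σ n h)) :=
    validHistA_snoc hv hfa hbT1 hbT2
  have haT := σ.valid (n+1) _ _ hvT
  rw [Fin.snoc_last, Fin.snoc_last] at haT
  obtain ⟨haT1, haT2⟩ := haT
  have haT1' : a' < aTrue σ n h := haT1
  have haT2' : aTrue σ n h < bTrue σ n h := haT2
  have hminF : a' < min (aTrue σ n h) (a' + (1/2)^n) := lt_min haT1' (by linarith)
  have hbF1 : a' < bFalse σ n h := by rw [bFalse, ← ha']; linarith
  have hbF2 : bFalse σ n h < aTrue σ n h := by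
    rw [bFalse, ← ha']
    have := min_le_left (aTrue σ n h) (a' + (1/2)^n); linarith
  have hbFd : bFalse σ n h ≤ a' + (1/2)^n := by
    rw [bFalse, ← ha']
    have := min_le_right (aTrue σ n h) (a' + (1/2)^n); linarith
  have hbF3 : bFalse σ n h < bL := by linarith
  have hbI1 : a' < (if i then bTrue σ n h else bFalse σ n h) := by
    cases i
    · simpa using hbF1
    · simpa using hbT1
  have hbI2 : (if i then bTrue σ n h else bFalse σ n h) < bL := by
    cases i
    · simpa using hbF3
    · simpa using hbT2
  have hbId : (if i then bTrue σ n h else bFalse σ n h) ≤ a' + (1/2)^n := by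
    cases i
    · simpa using hbFd
    · simpa using hbTd
  have hstep1 : (stepA σ n i h).1 (Fin.last (n+1)) = a' := by
    rw [stepA]; simp; rfl
  have hstep2 : (stepA σ n i h).2 (Fin.last (n+1)) = (if i then bTrue σ n h else bFalse σ n h) := by
    rw [stepA]; simp
  refine ⟨?_, ?_, ?_, ?_, hbF2⟩
  · rw [stepA]
    exact validHistA_snoc hv hfa hbI1 hbI2
  · rw [hstep1]; exact hfa
  · rw [hstep2]; exact hbI2
  · rw [hstep1, hstep2]; linarith

noncomputable def aP (σ : StratA a₀ b₀) (s : ℕ → Bool) (n : ℕ) : ℝ :=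
  (hA σ s n).1 (Fin.last n)

noncomputable def bP (σ : StratA a₀ b₀) (s : ℕ → Bool) (n : ℕ) : ℝ :=
  (hA σ s n).2 (Fin.last n)

lemma validA (σ : StratA a₀ b₀) (hab : a₀ < b₀) (s : ℕ → Bool) (n : ℕ) :
    ValidHistA a₀ b₀ (hA σ s n).1 (hA σ s n).2 := by
  induction n with
  | zero =>
    refine ⟨rfl, rfl, ?_, ?_, hab⟩
    · intro i j hij
      rw [Fin.lt_def] at hij
      have hi := i.isLt
      have hj := j.isLt
      omega
    · intro i j hij
      rw [Fin.lt_def] at hij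
      have hi := i.isLt
      have hj := j.isLt
      omega
  | succ n ih =>
    exact (stepA_facts σ n (hA σ s n) ih (s n)).1

lemma hA_coherent (σ : StratA a₀ b₀) (s : ℕ → Bool) :
    ∀ n m (hm : m ≤ n), (hA σ s n).1 ⟨m, Nat.lt_succ_of_le hm⟩ = aP σ s m ∧
      (hA σ s n).2 ⟨m, Nat.lt_succ_of_le hm⟩ = bP σ s m := by
  intro n
  induction n with
  | zero =>
    intro m hm
    interval_cases m
    exact ⟨rfl, rfl⟩
  | succ n ih =>
    intro m hm
    rcases Nat.lt_or_ge m (n+1) with hlt | hge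
    · have hm' : m ≤ n := by omega
      have hcast : (⟨m, Nat.lt_succ_of_le hm⟩ : Fin (n+2)) =
          Fin.castSucc ⟨m, Nat.lt_succ_of_le hm'⟩ := rfl
      constructor
      · show (stepA σ n (s n) (hA σ s n)).1 _ = _
        rw [hcast]
        simp only [stepA, Fin.snoc_castSucc]
        exact (ih m hm').1
      · show (stepA σ n (s n) (hA σ s n)).2 _ = _
        rw [hcast]
        simp only [stepA, Fin.snoc_castSucc]
        exact (ih m hm').2
    · have hm' : m = n + 1 := by omega
      subst hm'
      have hlast : (⟨n+1, Nat.lt_succ_of_le hm⟩ : Fin (n+2)) = Fin.last (n+1) := rfl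
      rw [hlast]
      exact ⟨rfl, rfl⟩

lemma hA_fst_eq (σ : StratA a₀ b₀) (s : ℕ → Bool) (n : ℕ) :
    (hA σ s n).1 = (fun i : Fin (n+1) => aP σ s i) ∧
      (hA σ s n).2 = (fun i : Fin (n+1) => bP σ s i) := by
  constructor <;> funext i <;>
    [ have := (hA_coherent σ s n i (Nat.lt_succ_iff.mp i.isLt)).1;
      have := (hA_coherent σ s n i (Nat.lt_succ_iff.mp i.isLt)).2] <;>
    · rw [← this]

lemma hA_congr (σ : StratA a₀ b₀) {s t : ℕ → Bool} (n : ℕ) (h : ∀ i < n, s i = t i) :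
    hA σ s n = hA σ t n := by
  induction n with
  | zero => rfl
  | succ n ih =>
    show stepA σ n (s n) (hA σ s n) = stepA σ n (t n) (hA σ t n)
    rw [ih (fun i hi => h i (by omega)), h n (by omega)]

lemma aP_mono (σ : StratA a₀ b₀) (hab : a₀ < b₀) (s : ℕ → Bool) :
    StrictMono (aP σ s) := by
  apply strictMono_nat_of_lt_succ
  intro n
  exact (stepA_facts σ n (hA σ s n) (validA σ hab s n) (s n)).2.1

lemma bP_anti (σ : StratA a₀ b₀) (hab : a₀ < b₀) (s : ℕ → Bool) :
    StrictAnti (bP σ s) := by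
  apply strictAnti_nat_of_succ_lt
  intro n
  exact (stepA_facts σ n (hA σ s n) (validA σ hab s n) (s n)).2.2.1

lemma aP_lt_bP (σ : StratA a₀ b₀) (hab : a₀ < b₀) (s : ℕ → Bool) (m n : ℕ) :
    aP σ s m < bP σ s n := by
  have hsame : ∀ k, aP σ s k < bP σ s k := fun k => (validA σ hab s k).2.2.2.2
  rcases le_total m n with h | h
  · exact lt_of_le_of_lt ((aP_mono σ hab s).monotone h) (hsame n)
  · exact lt_of_lt_of_le (hsame m) ((bP_anti σ hab s).antitone h)

lemma noWinA (hab : a₀ < b₀) (S : Set ℝ) (hS : IsBernsteinIn (Set.Icc a₀ b₀) S) :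
    ¬ ∃ σ : StratA a₀ b₀, WinningA σ S := by
  rintro ⟨σ, hw⟩
  have hsep : ∀ s t : ℕ → Bool, ∀ n, (∀ i < n, s i = t i) → s n = false → t n = true →
      bP σ s (n+1) < aP σ t (n+2) := by
    intro s t n h hs ht
    have hEq : hA σ s n = hA σ t n := hA_congr σ n h
    have hsn : bP σ s (n+1) = bFalse σ n (hA σ s n) := by
      show (stepA σ n (s n) (hA σ s n)).2 (Fin.last (n+1)) = _
      rw [stepA, hs]
      simp
    have htn : aP σ t (n+2) = aTrue σ n (hA σ t n) := by
      show (stepA σ (n+1) (t (n+1)) (stepA σ n (t n) (hA σ t n))).1 (Fin.last (n+2)) = _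
      rw [ht, stepA]
      simp only [Fin.snoc_last]
      rfl
    rw [hsn, htn, ← hEq]
    exact (stepA_facts σ n (hA σ s n) (validA σ hab s n) (s n)).2.2.2.2
  obtain ⟨x, hcont, hinj, htend, hbounds⟩ := cantorScheme (A := fun s => aP σ s)
    (U := fun s => bP σ s) (fun s => aP_mono σ hab s) (fun s => aP_lt_bP σ hab s)
    (fun s n => (stepA_facts σ n (hA σ s n) (validA σ hab s n) (s n)).2.2.2.1)
    (fun s t n h => by simp only [aP, bP, hA_congr σ n h]; exact ⟨trivial, trivial⟩)
    hsep
  have hmem : ∀ s, x s ∈ limitSetA σ := by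
      intro s
      refine ⟨aP σ s, bP σ s, ⟨rfl, rfl, fun n => ?_⟩, fun n => ?_, htend s⟩
      · exact ⟨aP_mono σ hab s (Nat.lt_succ_self n), aP_lt_bP σ hab s (n+1) (n+1),
          bP_anti σ hab s (Nat.lt_succ_self n)⟩
      · have h1 := (hA_fst_eq σ s n).1
        have h2 := (hA_fst_eq σ s n).2
        show (stepA σ n (s n) (hA σ s n)).1 (Fin.last (n+1)) = _
        rw [stepA]
        simp only [Fin.snoc_last]
        rw [nxt, h1, h2]
  obtain ⟨hnc, hcl⟩ := range_props (Set.Icc a₀ b₀) hcont hinj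
  exact hS.2.1 ⟨Set.range x, by rintro _ ⟨s, rfl⟩; exact hw (hmem s), hnc, hcl⟩

end GameA

section GameB

variable {a₀ b₀ : ℝ}

/-- State for the construction against a strategy of B: history plus a cap. -/
abbrev HSt (n : ℕ) : Type := (Fin (n+1) → ℝ) × (Fin (n+1) → ℝ) × ℝ

noncomputable def aTB (n : ℕ) (h : HSt n) : ℝ := (h.1 (Fin.last n) + h.2.2) / 2

noncomputable def bTB (σ : StratB a₀ b₀) (n : ℕ) (h : HSt n) : ℝ :=
  σ.g n (Fin.snoc h.1 (aTB n h)) h.2.1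

noncomputable def uTB (σ : StratB a₀ b₀) (n : ℕ) (h : HSt n) : ℝ :=
  min (min h.2.2 (bTB σ n h)) (aTB n h + (1/2)^n)

noncomputable def aFB (n : ℕ) (h : HSt n) : ℝ := (h.1 (Fin.last n) + aTB n h) / 2

noncomputable def bFB (σ : StratB a₀ b₀) (n : ℕ) (h : HSt n) : ℝ :=
  σ.g n (Fin.snoc h.1 (aFB n h)) h.2.1

noncomputable def uFB (σ : StratB a₀ b₀) (n : ℕ) (h : HSt n) : ℝ :=
  min (min ((aFB n h + aTB n h)/2) (bFB σ n h)) (aFB n h + (1/2)^n)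

noncomputable def stepB (σ : StratB a₀ b₀) (n : ℕ) (i : Bool) (h : HSt n) : HSt (n+1) :=
  if i then (Fin.snoc h.1 (aTB n h), Fin.snoc h.2.1 (bTB σ n h), uTB σ n h)
  else (Fin.snoc h.1 (aFB n h), Fin.snoc h.2.1 (bFB σ n h), uFB σ n h)

noncomputable def hB (σ : StratB a₀ b₀) (s : ℕ → Bool) : (n : ℕ) → HSt n
  | 0 => (fun _ => a₀, fun _ => b₀, b₀)
  | n+1 => stepB σ n (s n) (hB σ s n)

def InvB (a₀ b₀ : ℝ) {n : ℕ} (h : HSt n) : Prop :=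
  ValidHistA a₀ b₀ h.1 h.2.1 ∧ h.1 (Fin.last n) < h.2.2 ∧ h.2.2 ≤ h.2.1 (Fin.last n)

lemma stepB_facts (σ : StratB a₀ b₀) (n : ℕ) (h : HSt n) (hv : InvB a₀ b₀ h) (i : Bool) :
    InvB a₀ b₀ (stepB σ n i h) ∧
    h.1 (Fin.last n) < (stepB σ n i h).1 (Fin.last (n+1)) ∧
    (stepB σ n i h).2.1 (Fin.last (n+1)) < h.2.1 (Fin.last n) ∧
    (stepB σ n i h).2.2 ≤ h.2.2 ∧
    (stepB σ n i h).2.2 - (stepB σ n i h).1 (Fin.last (n+1)) ≤ (1/2)^n ∧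
    uFB σ n h < aTB n h := by
  obtain ⟨hva, hu1, hu2⟩ := hv
  set aL := h.1 (Fin.last n) with haL
  set bL := h.2.1 (Fin.last n) with hbL
  set u := h.2.2 with hu
  have hpow : (0:ℝ) < (1/2)^n := by positivity
  have haT1 : aL < aTB n h := by rw [aTB, ← haL, ← hu]; linarith
  have haT2 : aTB n h < u := by rw [aTB, ← haL, ← hu]; linarith
  have haT3 : aTB n h < bL := lt_of_lt_of_le haT2 hu2
  have hvT : ValidHistB a₀ b₀ (Fin.snoc h.1 (aTB n h)) h.2.1 := by
    refine ⟨by rw [snoc_zero']; exact hva.1, hva.2.1, strictMono_snoc hva.2.2.1 haT1,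
      hva.2.2.2.1, ?_⟩
    rw [Fin.snoc_last]
    exact haT3
  obtain ⟨hbT1, hbT2⟩ := σ.valid n _ _ hvT
  rw [Fin.snoc_last] at hbT1
  have hbT1' : aTB n h < bTB σ n h := hbT1
  have hbT2' : bTB σ n h < bL := hbT2
  have huT1 : aTB n h < uTB σ n h :=
    lt_min (lt_min haT2 hbT1') (by linarith)
  have huT2 : uTB σ n h ≤ u := le_trans (min_le_left _ _) (min_le_left _ _)
  have huT3 : uTB σ n h ≤ bTB σ n h := le_trans (min_le_left _ _) (min_le_right _ _)
  have huT4 : uTB σ n h ≤ aTB n h + (1/2)^n := min_le_right _ _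
  have haF1 : aL < aFB n h := by rw [aFB, ← haL]; linarith
  have haF2 : aFB n h < aTB n h := by rw [aFB, ← haL]; linarith
  have hvF : ValidHistB a₀ b₀ (Fin.snoc h.1 (aFB n h)) h.2.1 := by
    refine ⟨by rw [snoc_zero']; exact hva.1, hva.2.1, strictMono_snoc hva.2.2.1 haF1,
      hva.2.2.2.1, ?_⟩
    rw [Fin.snoc_last]
    linarith
  obtain ⟨hbF1, hbF2⟩ := σ.valid n _ _ hvF
  rw [Fin.snoc_last] at hbF1
  have hbF1' : aFB n h < bFB σ n h := hbF1
  have hbF2' : bFB σ n h < bL := hbF2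
  have huF1 : aFB n h < uFB σ n h :=
    lt_min (lt_min (by linarith) hbF1') (by linarith)
  have huF2 : uFB σ n h < aTB n h :=
    lt_of_le_of_lt (le_trans (min_le_left _ _) (min_le_left _ _)) (by linarith)
  have huF3 : uFB σ n h ≤ bFB σ n h := le_trans (min_le_left _ _) (min_le_right _ _)
  have huF4 : uFB σ n h ≤ aFB n h + (1/2)^n := min_le_right _ _
  cases i
  · -- false branch
    have hred : stepB σ n false h =
        (Fin.snoc h.1 (aFB n h), Fin.snoc h.2.1 (bFB σ n h), uFB σ n h) := by
      rw [stepB]; simp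
    rw [hred]
    refine ⟨⟨validHistA_snoc hva haF1 hbF1' hbF2', ?_, ?_⟩, ?_, ?_, ?_, ?_, huF2⟩
    · simp only [Fin.snoc_last]; exact huF1
    · simp only [Fin.snoc_last]; exact huF3
    · simp only [Fin.snoc_last]; exact haF1
    · simp only [Fin.snoc_last]; exact hbF2'
    · linarith
    · simp only [Fin.snoc_last]; linarith
  · -- true branch
    have hred : stepB σ n true h =
        (Fin.snoc h.1 (aTB n h), Fin.snoc h.2.1 (bTB σ n h), uTB σ n h) := by
      rw [stepB]; simp
    rw [hred]
    refine ⟨⟨validHistA_snoc hva haT1 hbT1' hbT2', ?_, ?_⟩, ?_, ?_, ?_, ?_, huF2⟩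
    · simp only [Fin.snoc_last]; exact huT1
    · simp only [Fin.snoc_last]; exact huT3
    · simp only [Fin.snoc_last]; exact haT1
    · simp only [Fin.snoc_last]; exact hbT2'
    · exact huT2
    · simp only [Fin.snoc_last]; linarith

noncomputable def aQ (σ : StratB a₀ b₀) (s : ℕ → Bool) (n : ℕ) : ℝ :=
  (hB σ s n).1 (Fin.last n)

noncomputable def bQ (σ : StratB a₀ b₀) (s : ℕ → Bool) (n : ℕ) : ℝ :=
  (hB σ s n).2.1 (Fin.last n)

noncomputable def uQ (σ : StratB a₀ b₀) (s : ℕ → Bool) (n : ℕ) : ℝ :=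
  (hB σ s n).2.2

lemma validB (σ : StratB a₀ b₀) (hab : a₀ < b₀) (s : ℕ → Bool) (n : ℕ) :
    InvB a₀ b₀ (hB σ s n) := by
  induction n with
  | zero =>
    refine ⟨⟨rfl, rfl, ?_, ?_, hab⟩, hab, le_refl _⟩
    · intro i j hij
      rw [Fin.lt_def] at hij
      have hi := i.isLt
      have hj := j.isLt
      omega
    · intro i j hij
      rw [Fin.lt_def] at hij
      have hi := i.isLt
      have hj := j.isLt
      omega
  | succ n ih =>
    exact (stepB_facts σ n (hB σ s n) ih (s n)).1

lemma hB_coherent (σ : StratB a₀ b₀) (s : ℕ → Bool) :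
    ∀ n m (hm : m ≤ n), (hB σ s n).1 ⟨m, Nat.lt_succ_of_le hm⟩ = aQ σ s m ∧
      (hB σ s n).2.1 ⟨m, Nat.lt_succ_of_le hm⟩ = bQ σ s m := by
  intro n
  induction n with
  | zero =>
    intro m hm
    interval_cases m
    exact ⟨rfl, rfl⟩
  | succ n ih =>
    intro m hm
    rcases Nat.lt_or_ge m (n+1) with hlt | hge
    · have hm' : m ≤ n := by omega
      have hcast : (⟨m, Nat.lt_succ_of_le hm⟩ : Fin (n+2)) =
          Fin.castSucc ⟨m, Nat.lt_succ_of_le hm'⟩ := rfl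
      have : hB σ s (n+1) = stepB σ n (s n) (hB σ s n) := rfl
      rw [this, hcast]
      cases s n <;>
        · simp only [stepB, if_true, if_false, Bool.false_eq_true, Fin.snoc_castSucc]
          exact ih m hm'
    · have hm' : m = n + 1 := by omega
      subst hm'
      have hlast : (⟨n+1, Nat.lt_succ_of_le hm⟩ : Fin (n+2)) = Fin.last (n+1) := rfl
      rw [hlast]
      exact ⟨rfl, rfl⟩

lemma hB_congr (σ : StratB a₀ b₀) {s t : ℕ → Bool} (n : ℕ) (h : ∀ i < n, s i = t i) :
    hB σ s n = hB σ t n := by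
  induction n with
  | zero => rfl
  | succ n ih =>
    show stepB σ n (s n) (hB σ s n) = stepB σ n (t n) (hB σ t n)
    rw [ih (fun i hi => h i (by omega)), h n (by omega)]

lemma aQ_mono (σ : StratB a₀ b₀) (hab : a₀ < b₀) (s : ℕ → Bool) :
    StrictMono (aQ σ s) := by
  apply strictMono_nat_of_lt_succ
  intro n
  exact (stepB_facts σ n (hB σ s n) (validB σ hab s n) (s n)).2.1

lemma bQ_anti (σ : StratB a₀ b₀) (hab : a₀ < b₀) (s : ℕ → Bool) :
    StrictAnti (bQ σ s) := by
  apply strictAnti_nat_of_succ_lt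
  intro n
  exact (stepB_facts σ n (hB σ s n) (validB σ hab s n) (s n)).2.2.1

lemma uQ_anti (σ : StratB a₀ b₀) (hab : a₀ < b₀) (s : ℕ → Bool) :
    Antitone (uQ σ s) := by
  apply antitone_nat_of_succ_le
  intro n
  exact (stepB_facts σ n (hB σ s n) (validB σ hab s n) (s n)).2.2.2.1

lemma aQ_lt_uQ (σ : StratB a₀ b₀) (hab : a₀ < b₀) (s : ℕ → Bool) (m n : ℕ) :
    aQ σ s m < uQ σ s n := by
  have hsame : ∀ k, aQ σ s k < uQ σ s k := fun k => (validB σ hab s k).2.1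
  rcases le_total m n with h | h
  · exact lt_of_le_of_lt ((aQ_mono σ hab s).monotone h) (hsame n)
  · exact lt_of_lt_of_le (hsame m) (uQ_anti σ hab s h)

lemma noWinB (hab : a₀ < b₀) (S : Set ℝ) (hS : IsBernsteinIn (Set.Icc a₀ b₀) S) :
    ¬ ∃ σ : StratB a₀ b₀, WinningB σ S := by
  rintro ⟨σ, hw⟩
  have hsep : ∀ s t : ℕ → Bool, ∀ n, (∀ i < n, s i = t i) → s n = false → t n = true →
      uQ σ s (n+1) < aQ σ t (n+2) := by
    intro s t n h hs ht
    have hEq : hB σ s n = hB σ t n := hB_congr σ n h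
    have hsn : uQ σ s (n+1) = uFB σ n (hB σ s n) := by
      show (stepB σ n (s n) (hB σ s n)).2.2 = _
      rw [hs, stepB]
      simp
    have htn : aQ σ t (n+1) = aTB n (hB σ t n) := by
      show (stepB σ n (t n) (hB σ t n)).1 (Fin.last (n+1)) = _
      rw [ht, stepB]
      simp
    have h1 : uQ σ s (n+1) < aQ σ t (n+1) := by
      rw [hsn, htn, ← hEq]
      exact (stepB_facts σ n (hB σ s n) (validB σ hab s n) (s n)).2.2.2.2.2
    exact lt_trans h1 (aQ_mono σ hab t (Nat.lt_succ_self (n+1)))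
  obtain ⟨x, hcont, hinj, htend, hbounds⟩ := cantorScheme (A := fun s => aQ σ s)
    (U := fun s => uQ σ s) (fun s => aQ_mono σ hab s) (fun s => aQ_lt_uQ σ hab s)
    (fun s n => (stepB_facts σ n (hB σ s n) (validB σ hab s n) (s n)).2.2.2.2.1)
    (fun s t n h => by simp only [aQ, uQ, hB_congr σ n h]; exact ⟨trivial, trivial⟩)
    hsep
  have hmem : ∀ s, x s ∈ limitSetB σ := by
    intro s
    refine ⟨aQ σ s, bQ σ s, ⟨rfl, rfl, fun n => ?_⟩, fun n => ?_, htend s⟩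
    · refine ⟨aQ_mono σ hab s (Nat.lt_succ_self n), ?_, bQ_anti σ hab s (Nat.lt_succ_self n)⟩
      exact (validB σ hab s (n+1)).1.2.2.2.2
    · -- ConsistentB
      have h1 : ∀ i : Fin (n+2), (hB σ s (n+1)).1 i = aQ σ s i := fun i =>
        (hB_coherent σ s (n+1) i (Nat.lt_succ_iff.mp i.isLt)).1
      have h2 : ∀ i : Fin (n+1), (hB σ s n).2.1 i = bQ σ s i := fun i =>
        (hB_coherent σ s n i (Nat.lt_succ_iff.mp i.isLt)).2
      have h2' : (hB σ s n).2.1 = fun i : Fin (n+1) => bQ σ s i := funext h2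
      cases hs : s n
      · have hred : hB σ s (n+1) =
            (Fin.snoc (hB σ s n).1 (aFB n (hB σ s n)), Fin.snoc (hB σ s n).2.1
              (bFB σ n (hB σ s n)), uFB σ n (hB σ s n)) := by
          show stepB σ n (s n) (hB σ s n) = _
          rw [hs, stepB]
          simp
        have hfst : Fin.snoc (hB σ s n).1 (aFB n (hB σ s n)) =
            fun i : Fin (n+2) => aQ σ s i := by
          funext i
          rw [← h1 i, hred]
        show (hB σ s (n+1)).2.1 (Fin.last (n+1)) = _
        rw [hred]
        simp only [Fin.snoc_last]
        rw [bFB, hfst, h2']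
      · have hred : hB σ s (n+1) =
            (Fin.snoc (hB σ s n).1 (aTB n (hB σ s n)), Fin.snoc (hB σ s n).2.1
              (bTB σ n (hB σ s n)), uTB σ n (hB σ s n)) := by
          show stepB σ n (s n) (hB σ s n) = _
          rw [hs, stepB]
          simp
        have hfst : Fin.snoc (hB σ s n).1 (aTB n (hB σ s n)) =
            fun i : Fin (n+2) => aQ σ s i := by
          funext i
          rw [← h1 i, hred]
        show (hB σ s (n+1)).2.1 (Fin.last (n+1)) = _
        rw [hred]
        simp only [Fin.snoc_last]
        rw [bTB, hfst, h2']
  obtain ⟨hnc, hcl⟩ := range_props (Set.Icc a₀ b₀) hcont hinj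
  refine hS.2.2 ⟨Set.range x, ?_, hnc, hcl⟩
  rintro _ ⟨s, rfl⟩
  exact hw (hmem s)

end GameB


/-- If the target set is a Bernstein set in `[a₀, b₀]`, then neither
player has a winning strategy. -/
theorem stmt15 (a₀ b₀ : ℝ) (hab : a₀ < b₀) (S : Set ℝ)
    (hS : IsBernsteinIn (Set.Icc a₀ b₀) S) :
    (¬ ∃ σ : StratA a₀ b₀, WinningA σ S) ∧ (¬ ∃ σ : StratB a₀ b₀, WinningB σ S) :=
  ⟨noWinA hab S hS, noWinB hab S hS⟩
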